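/- arXiv:2605.30203 — 2 statements merged into one kernel-verified Lean document; each statement's English description precedes it below -/
import Mathlib

section
/- Let (Ω, 𝒜, P) be a probability space, let n, d ≥ 1, let μ : Fin d → ℝ satisfy 0 < μ j < 1 for every j, and let X : Fin n → Fin d → Ω → ℕ be an independent Bernoulli array with parameter μ. Let y : Fin d → ℕ satisfy y j ≤ 1 and let k : Fin d → ℕ satisfy y j ≤ k j ≤ n for every j. Then P({ω : for every j, y j + Σ_{i < n−1} X i j (ω) = k j}) / P({ω : for every j, Σ_{i < n} X i j (ω) = k j}) = ∏_{j ∈ Fin d} (if y j = 1 then (k j / n) / μ j else (1 − k j / n) / (1 − μ j)); in particular the denominator probability is strictly positive. (Ratio Equality: for a product-distributed population the Bayesian decision ratio equals the likelihood ratio test statistic.) -/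
open MeasureTheory ProbabilityTheory Finset

/-- `X : Fin n → Fin d → Ω → ℕ` is an independent Bernoulli array with parameter
`μ : Fin d → ℝ` if the family `(X i j)` indexed by pairs `(i, j)` is mutually
independent, and each `X i j` takes only the values `0` and `1` with
`P(X i j = 1) = μ j`. -/
def IsBernoulliArray {Ω : Type*} [MeasurableSpace Ω] (P : Measure Ω)
    {n d : ℕ} (X : Fin n → Fin d → Ω → ℕ) (μ : Fin d → ℝ) : Prop :=
  (∀ i j, Measurable (X i j)) ∧
  iIndepFun
    (fun p : Fin n × Fin d => X p.1 p.2) P ∧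
  (∀ i j ω, X i j ω = 0 ∨ X i j ω = 1) ∧
  (∀ i j, (P {ω | X i j ω = 1}).toReal = μ j)

private lemma fin2_val_eq (x : Fin 2) : (x : ℕ) = if x = 1 then 1 else 0 := by
  fin_cases x <;> simp

private lemma colsum (m t : ℕ) (a b : ℝ) :
    ∑ v ∈ univ.filter (fun v : Fin m → Fin 2 => ∑ i, ((v i : ℕ)) = t),
      ∏ i, (if v i = 1 then a else b)
    = (m.choose t : ℝ) * a ^ t * b ^ (m - t) := by
  classical
  have hval : ∀ v : Fin m → Fin 2,
      ∑ i, ((v i : ℕ)) = #(univ.filter fun i => v i = 1) := by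
    intro v
    rw [Finset.card_filter]
    exact Finset.sum_congr rfl fun i _ => fin2_val_eq (v i)
  rw [Finset.sum_nbij' (i := fun v : Fin m → Fin 2 => univ.filter fun i => v i = 1)
    (j := fun s : Finset (Fin m) => fun i => if i ∈ s then 1 else 0)
    (t := Finset.powersetCard t (univ : Finset (Fin m)))
    (g := fun _ => a ^ t * b ^ (m - t))]
  · rw [Finset.sum_const, Finset.card_powersetCard, Finset.card_univ, Fintype.card_fin,
      nsmul_eq_mul, mul_assoc]
  · intro v hv
    simp only [Finset.mem_filter, Finset.mem_univ, true_and] at hv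
    rw [Finset.mem_powersetCard]
    exact ⟨Finset.subset_univ _, by rw [← hval v, hv]⟩
  · intro s hs
    simp only [Finset.mem_powersetCard] at hs
    simp only [Finset.mem_filter, Finset.mem_univ, true_and]
    calc ∑ i, (((if i ∈ s then (1 : Fin 2) else 0) : Fin 2) : ℕ)
        = ∑ i, (if i ∈ s then 1 else 0) := by
          refine Finset.sum_congr rfl fun i _ => ?_
          split <;> simp
      _ = #s := (Finset.card_filter _ _).symm.trans (by rw [Finset.filter_mem_eq_inter,
          Finset.univ_inter])
      _ = t := hs.2
  · intro v hv
    funext i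
    rcases (by decide : ∀ x : Fin 2, x = 0 ∨ x = 1) (v i) with h | h <;>
      simp [Finset.mem_filter, h]
  · intro s hs
    ext i
    simp only [Finset.mem_filter, Finset.mem_univ, true_and]
    constructor
    · intro h
      by_contra hi
      simp [hi] at h
    · intro h; simp [h]
  · intro v hv
    simp only [Finset.mem_filter, Finset.mem_univ, true_and] at hv
    have hcard : #(univ.filter fun i => v i = 1) = t := by rw [← hval v, hv]
    rw [Finset.prod_ite, Finset.prod_const, Finset.prod_const, hcard]
    congr 2
    have := Finset.card_filter_add_card_filter_not (s := (univ : Finset (Fin m)))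
      (p := fun i => v i = 1)
    rw [Finset.card_univ, Fintype.card_fin] at this
    omega

private lemma bernoulli_sum_prob {Ω : Type*} [MeasurableSpace Ω] (P : Measure Ω)
    [IsProbabilityMeasure P] {m d : ℕ} (μ : Fin d → ℝ)
    (Y : Fin m → Fin d → Ω → ℕ)
    (hmeas : ∀ i j, Measurable (Y i j))
    (h01 : ∀ i j ω, Y i j ω = 0 ∨ Y i j ω = 1)
    (h1 : ∀ i j, (P {ω | Y i j ω = 1}).toReal = μ j)
    (hfact : ∀ b : Fin m → Fin d → Fin 2,
      P (⋂ i, ⋂ j, {ω | Y i j ω = (b i j : ℕ)})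
        = ∏ i, ∏ j, P {ω | Y i j ω = (b i j : ℕ)})
    (c : Fin d → ℕ) :
    (P {ω | ∀ j, (∑ i, Y i j ω) = c j}).toReal
      = ∏ j, (m.choose (c j) : ℝ) * μ j ^ (c j) * (1 - μ j) ^ (m - c j) := by
  classical
  have hone : ∀ (i : Fin m) (j : Fin d) (v : Fin 2),
      (P {ω | Y i j ω = (v : ℕ)}).toReal = if v = 1 then μ j else 1 - μ j := by
    intro i j v
    have hms : MeasurableSet {ω | Y i j ω = 1} := hmeas i j (measurableSet_singleton 1)
    rcases (by decide : ∀ x : Fin 2, x = 0 ∨ x = 1) v with rfl | rfl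
    · have hset : {ω | Y i j ω = 0} = {ω | Y i j ω = 1}ᶜ := by
        ext ω
        simp only [Set.mem_setOf_eq, Set.mem_compl_iff]
        rcases h01 i j ω with h | h <;> simp [h]
      rw [if_neg (by decide : ¬ ((0 : Fin 2) = 1))]
      rw [show ((0 : Fin 2) : ℕ) = 0 from rfl, hset, measure_compl hms (measure_ne_top _ _),
        measure_univ, ENNReal.toReal_sub_of_le prob_le_one ENNReal.one_ne_top,
        ENNReal.toReal_one, h1 i j]
    · rw [if_pos rfl, show ((1 : Fin 2) : ℕ) = 1 from rfl]
      exact h1 i j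
  set q : Fin d → Fin 2 → ℝ := fun j v => if v = 1 then μ j else 1 - μ j with hq
  set E : (Fin m → Fin d → Fin 2) → Set Ω :=
    fun b => ⋂ i, ⋂ j, {ω | Y i j ω = (b i j : ℕ)} with hE
  have hEmeas : ∀ b, MeasurableSet (E b) := fun b =>
    MeasurableSet.iInter fun i => MeasurableSet.iInter fun j =>
      hmeas i j (measurableSet_singleton _)
  set A : Finset (Fin m → Fin d → Fin 2) :=
    univ.filter (fun b : Fin m → Fin d → Fin 2 => ∀ j, (∑ i, ((b i j : ℕ))) = c j) with hA
  have hunion : {ω | ∀ j, (∑ i, Y i j ω) = c j} = ⋃ b ∈ A, E b := by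
    ext ω
    simp only [Set.mem_setOf_eq, Set.mem_iUnion, hA, Finset.mem_filter, Finset.mem_univ,
      true_and, hE, Set.mem_iInter]
    constructor
    · intro h
      have hbv : ∀ (i : Fin m) (j : Fin d),
          (((if Y i j ω = 1 then 1 else 0) : Fin 2) : ℕ) = Y i j ω := by
        intro i j; rcases h01 i j ω with h' | h' <;> simp [h']
      refine ⟨fun i j => if Y i j ω = 1 then 1 else 0, ?_, ?_⟩
      · intro j
        rw [Finset.sum_congr rfl fun i _ => hbv i j]
        exact h j
      · intro i j
        exact (hbv i j).symm
    · rintro ⟨b, hbsum, hbω⟩ j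
      rw [← hbsum j]
      exact Finset.sum_congr rfl fun i _ => hbω i j
  have hdisj : (A : Set (Fin m → Fin d → Fin 2)).PairwiseDisjoint E := by
    intro b _ b' _ hne
    rw [Function.onFun, Set.disjoint_left]
    intro ω hb hb'
    apply hne
    funext i j
    simp only [hE, Set.mem_iInter, Set.mem_setOf_eq] at hb hb'
    have h1' := hb i j
    have h2' := hb' i j
    exact Fin.val_injective (by omega)
  have hmeasure : P (⋃ b ∈ A, E b) = ∑ b ∈ A, P (E b) :=
    measure_biUnion_finset hdisj fun b _ => hEmeas b
  have hatom : ∀ b, (P (E b)).toReal = ∏ j, ∏ i, q j (b i j) := by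
    intro b
    rw [hE]
    dsimp only
    rw [hfact b, ENNReal.toReal_prod, ← Finset.prod_comm]
    refine Finset.prod_congr rfl fun i _ => ?_
    rw [ENNReal.toReal_prod]
    exact Finset.prod_congr rfl fun j _ => hone i j (b i j)
  rw [hunion, hmeasure, ENNReal.toReal_sum (fun b _ => measure_ne_top _ _)]
  calc ∑ b ∈ A, (P (E b)).toReal
      = ∑ b ∈ A, ∏ j, ∏ i, q j (b i j) := Finset.sum_congr rfl fun b _ => hatom b
    _ = ∏ j, ∑ v ∈ univ.filter (fun v : Fin m → Fin 2 => ∑ i, ((v i : ℕ)) = c j),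
          ∏ i, q j (v i) := by
        rw [Finset.prod_univ_sum]
        refine Finset.sum_nbij' (i := fun b : Fin m → Fin d → Fin 2 => fun j i => b i j)
          (j := fun g : Fin d → Fin m → Fin 2 => fun i j => g j i) ?_ ?_ ?_ ?_ ?_
        · intro b hb
          simp only [hA, Finset.mem_filter, Finset.mem_univ, true_and] at hb
          rw [Fintype.mem_piFinset]
          intro j
          simp only [Finset.mem_filter, Finset.mem_univ, true_and]
          exact hb j
        · intro g hg
          rw [Fintype.mem_piFinset] at hg
          simp only [hA, Finset.mem_filter, Finset.mem_univ, true_and]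
          intro j
          have := hg j
          simp only [Finset.mem_filter, Finset.mem_univ, true_and] at this
          exact this
        · intro b _; rfl
        · intro g _; rfl
        · intro b _; rfl
    _ = ∏ j, (m.choose (c j) : ℝ) * μ j ^ (c j) * (1 - μ j) ^ (m - c j) := by
        refine Finset.prod_congr rfl fun j _ => ?_
        simp only [hq]
        exact colsum m (c j) (μ j) (1 - μ j)

private lemma ratio_term (n K yj : ℕ) (μ : ℝ) (hn : 1 ≤ n) (hμ0 : 0 < μ) (hμ1 : μ < 1)
    (hy : yj ≤ 1) (hyK : yj ≤ K) (hKn : K ≤ n) :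
    ((n-1).choose (K - yj) : ℝ) * μ ^ (K - yj) * (1 - μ) ^ ((n-1) - (K - yj)) /
      ((n.choose K : ℝ) * μ ^ K * (1 - μ) ^ (n - K)) =
    if yj = 1 then ((K : ℝ)/n)/μ else (1 - (K : ℝ)/n)/(1-μ) := by
  have hν : (0:ℝ) < 1 - μ := by linarith
  have hC : (0:ℝ) < (n.choose K : ℝ) := by
    exact_mod_cast Nat.choose_pos hKn
  have hn0 : (0:ℝ) < (n:ℝ) := by exact_mod_cast hn
  interval_cases yj
  · -- yj = 0
    rw [if_neg (by omega), Nat.sub_zero]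
    rcases eq_or_lt_of_le hKn with rfl | hKlt
    · have hK0 : (K:ℝ) ≠ 0 := by
        have : (0:ℕ) < K := hn
        exact_mod_cast this.ne'
      simp [Nat.choose_eq_zero_of_lt (show K - 1 < K by omega), div_self hK0]
    · have hid : (n.choose K) * (n - K) = n * ((n-1).choose K) := by
        have h0 := Nat.add_one_mul_choose_eq (n-1) (n-K-1)
        rw [show n-1+1 = n by omega, show n-K-1+1 = n - K by omega] at h0
        rw [show n - K - 1 = (n-1) - K by omega] at h0
        rw [Nat.choose_symm (by omega : K ≤ n - 1)] at h0
        rw [Nat.choose_symm hKn] at h0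
        omega
      have hidR : (n.choose K : ℝ) * ((n:ℝ) - K) = (n:ℝ) * ((n-1).choose K : ℝ) := by
        have h' : ((n.choose K * (n - K) : ℕ) : ℝ) = ((n * ((n-1).choose K) : ℕ) : ℝ) := by
          exact_mod_cast congrArg (Nat.cast : ℕ → ℝ) hid
        push_cast [Nat.cast_sub hKn] at h'
        exact h'
      have hpow : (1 - μ) ^ (n - K) = (1 - μ) ^ ((n-1) - K) * (1 - μ) := by
        rw [← pow_succ]
        congr 1
        omega
      have hone : (1 : ℝ) - (K:ℝ)/(n:ℝ) = ((n:ℝ) - K)/(n:ℝ) := by field_simp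
      rw [hpow, hone, div_div, div_eq_div_iff (by positivity) (by positivity)]
      linear_combination (-(μ^K * (1-μ)^((n-1)-K) * (1-μ))) * hidR
  · -- yj = 1
    rw [if_pos rfl]
    have hK1 : 1 ≤ K := hyK
    have hid : (n.choose K) * K = n * ((n-1).choose (K-1)) := by
      have h0 := Nat.add_one_mul_choose_eq (n-1) (K-1)
      rw [show n-1+1 = n by omega, show K-1+1 = K by omega] at h0
      omega
    have hidR : (n.choose K : ℝ) * (K:ℝ) = (n:ℝ) * ((n-1).choose (K-1) : ℝ) := by
      exact_mod_cast congrArg (Nat.cast : ℕ → ℝ) hid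
    have hμK : μ ^ K = μ ^ (K - 1) * μ := by
      rw [← pow_succ]
      congr 1
      omega
    have hνe : (n-1) - (K-1) = n - K := by omega
    rw [hνe, hμK, div_div, div_eq_div_iff (by positivity) (by positivity)]
    linear_combination (-(μ^(K-1) * μ * (1-μ)^(n-K))) * hidR

/-- **Ratio Equality.** For a product-distributed (independent Bernoulli)
population, the Bayesian decision ratio equals the likelihood ratio test
statistic; in particular the denominator probability is strictly positive. -/
theorem ratio_equality {Ω : Type*} [MeasurableSpace Ω] (P : Measure Ω)
    [IsProbabilityMeasure P] (n d : ℕ) (hn : 1 ≤ n) (hd : 1 ≤ d)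
    (μ : Fin d → ℝ) (hμ : ∀ j, 0 < μ j ∧ μ j < 1)
    (X : Fin n → Fin d → Ω → ℕ) (hX : IsBernoulliArray P X μ)
    (y : Fin d → ℕ) (hy : ∀ j, y j ≤ 1)
    (k : Fin d → ℕ) (hk : ∀ j, y j ≤ k j ∧ k j ≤ n) :
    0 < (P {ω | ∀ j, (∑ i : Fin n, X i j ω) = k j}).toReal ∧
    (P {ω | ∀ j, y j + ∑ i ∈ univ.filter (fun i : Fin n => (i : ℕ) < n - 1),
        X i j ω = k j}).toReal /
      (P {ω | ∀ j, (∑ i : Fin n, X i j ω) = k j}).toReal =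
    ∏ j : Fin d,
      (if y j = 1 then ((k j : ℝ) / n) / μ j
        else (1 - (k j : ℝ) / n) / (1 - μ j)) := by
  classical
  obtain ⟨hmeas, hind, h01, h1⟩ := hX
  have hle : n - 1 ≤ n := Nat.sub_le n 1
  -- factorization for the full array
  have hfactden : ∀ b : Fin n → Fin d → Fin 2,
      P (⋂ i, ⋂ j, {ω | X i j ω = (b i j : ℕ)})
        = ∏ i, ∏ j, P {ω | X i j ω = (b i j : ℕ)} := by
    intro b
    have key := hind.measure_inter_preimage_eq_mul (S := (univ : Finset (Fin n × Fin d)))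
      (sets := fun p => ({(b p.1 p.2 : ℕ)} : Set ℕ)) (fun p _ => measurableSet_singleton _)
    have hset : (⋂ p ∈ (univ : Finset (Fin n × Fin d)),
        (fun p : Fin n × Fin d => X p.1 p.2) p ⁻¹' ({(b p.1 p.2 : ℕ)} : Set ℕ))
        = ⋂ i, ⋂ j, {ω | X i j ω = (b i j : ℕ)} := by
      ext ω
      simp only [Set.mem_iInter, Set.mem_preimage, Set.mem_singleton_iff, Set.mem_setOf_eq]
      exact ⟨fun h i j => h (i, j) (Finset.mem_univ _), fun h p _ => h p.1 p.2⟩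
    rw [hset] at key
    rw [key, ← Fintype.prod_prod_type']
    rfl
  -- factorization for the truncated array
  set e : Fin (n-1) × Fin d ↪ Fin n × Fin d :=
    (Fin.castLEEmb hle).prodMap (Function.Embedding.refl (Fin d)) with he
  have heval : ∀ q : Fin (n-1) × Fin d, e q = (Fin.castLE hle q.1, q.2) := fun q => rfl
  have hfactnum : ∀ b : Fin (n-1) → Fin d → Fin 2,
      P (⋂ i, ⋂ j, {ω | X (Fin.castLE hle i) j ω = (b i j : ℕ)})
        = ∏ i, ∏ j, P {ω | X (Fin.castLE hle i) j ω = (b i j : ℕ)} := by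
    intro b
    set sets : Fin n × Fin d → Set ℕ := fun p =>
      if hp : (p.1 : ℕ) < n - 1 then ({(b ⟨(p.1 : ℕ), hp⟩ p.2 : ℕ)} : Set ℕ)
      else Set.univ with hsets
    have hsetsmeas : ∀ p ∈ univ.map e, MeasurableSet (sets p) := by
      intro p _
      rw [hsets]
      dsimp only
      split
      · exact measurableSet_singleton _
      · exact MeasurableSet.univ
    have hsete : ∀ q : Fin (n-1) × Fin d,
        sets (e q) = ({(b q.1 q.2 : ℕ)} : Set ℕ) := by
      intro q
      rw [heval q, hsets]
      dsimp only
      rw [dif_pos (show ((Fin.castLE hle q.1 : Fin n) : ℕ) < n - 1 from q.1.isLt)]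
      congr 1
    have key := hind.measure_inter_preimage_eq_mul (S := univ.map e)
      (sets := sets) hsetsmeas
    have hset : (⋂ p ∈ univ.map e, (fun p : Fin n × Fin d => X p.1 p.2) p ⁻¹' sets p)
        = ⋂ i, ⋂ j, {ω | X (Fin.castLE hle i) j ω = (b i j : ℕ)} := by
      ext ω
      simp only [Set.mem_iInter, Set.mem_preimage, Finset.mem_map, Finset.mem_univ, true_and,
        Set.mem_setOf_eq]
      constructor
      · intro h i j
        have := h (e (i, j)) ⟨(i, j), rfl⟩
        rw [hsete (i, j)] at this
        exact this
      · rintro h p ⟨q, rfl⟩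
        rw [hsete q]
        exact h q.1 q.2
    rw [hset] at key
    rw [key, Finset.prod_map, ← Fintype.prod_prod_type']
    refine Finset.prod_congr rfl fun q _ => ?_
    rw [hsete q]
    rfl
  -- the two probabilities
  have hden := bernoulli_sum_prob P μ X hmeas h01 h1 hfactden k
  have hnum := bernoulli_sum_prob P μ (fun i j => X (Fin.castLE hle i) j)
    (fun i j => hmeas _ j) (fun i j ω => h01 _ j ω) (fun i j => h1 _ j) hfactnum
    (fun j => k j - y j)
  -- rewrite the numerator event
  have hfilter : (univ.filter fun i : Fin n => (i : ℕ) < n - 1)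
      = univ.map (Fin.castLEEmb hle) := by
    ext i
    simp only [Finset.mem_filter, Finset.mem_univ, true_and, Finset.mem_map,
      Fin.castLEEmb_apply]
    constructor
    · intro h
      exact ⟨⟨(i : ℕ), h⟩, rfl⟩
    · rintro ⟨a, rfl⟩
      simp only [Fin.coe_castLE]
      exact a.isLt
  have hevent : {ω | ∀ j, y j + ∑ i ∈ univ.filter (fun i : Fin n => (i : ℕ) < n - 1),
        X i j ω = k j}
      = {ω | ∀ j, (∑ i, (fun i j => X (Fin.castLE hle i) j) i j ω) = k j - y j} := by
    ext ω
    simp only [Set.mem_setOf_eq]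
    have hs : ∀ j, ∑ i ∈ univ.filter (fun i : Fin n => (i : ℕ) < n - 1), X i j ω
        = ∑ i : Fin (n-1), X (Fin.castLE hle i) j ω := by
      intro j
      rw [hfilter, Finset.sum_map]
      rfl
    constructor
    · intro h j
      have := h j
      rw [hs j] at this
      have := (hk j).1
      omega
    · intro h j
      rw [hs j]
      have := h j
      have := (hk j).1
      omega
  have hpos : ∀ j : Fin d,
      0 < (n.choose (k j) : ℝ) * μ j ^ (k j) * (1 - μ j) ^ (n - k j) := by
    intro j
    have h1' := (hμ j).1
    have h2' := (hμ j).2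
    refine mul_pos (mul_pos ?_ (pow_pos h1' _)) (pow_pos (by linarith) _)
    exact_mod_cast Nat.choose_pos (hk j).2
  have hDpos : 0 < ∏ j, (n.choose (k j) : ℝ) * μ j ^ (k j) * (1 - μ j) ^ (n - k j) :=
    Finset.prod_pos fun j _ => hpos j
  constructor
  · rw [hden]
    exact hDpos
  · rw [hevent, hnum, hden, ← Finset.prod_div_distrib]
    refine Finset.prod_congr rfl fun j _ => ?_
    exact ratio_term n (k j) (y j) (μ j) hn (hμ j).1 (hμ j).2 (hy j) (hk j).1 (hk j).2
end

section
/- Let (Ω, 𝒜, P) be a probability space, let n, d ≥ 1 and 1 ≤ m ≤ d, let μ : Fin d → ℝ satisfy 0 < μ j < 1 for every j ≤ m, and let X : Fin n → Fin d → Ω → ℕ have right-repeated structure with midpoint m and parameter μ. Let y : Fin d → ℕ and k : Fin d → ℕ satisfy: y j ≤ 1 and y j ≤ k j ≤ n for every j ≤ m, and k j = k m and y j = y m for every j > m. Then P({ω : for every j ∈ Fin d, y j + Σ_{i < n−1} X i j (ω) = k j}) / P({ω : for every j ∈ Fin d, Σ_{i < n} X i j (ω) = k j}) = ∏_{j ≤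 m} (if y j = 1 then (k j / n) / μ j else (1 − k j / n) / (1 − μ j)); in particular the denominator probability is strictly positive. (Partial Ratio Equality, side = right: the Bayesian decision ratio on a population whose attributes above the midpoint are exact copies of attribute m equals the likelihood ratio test statistic clipped to the first m attributes.) -/
open MeasureTheory ProbabilityTheory Finset

/-- `X : Fin n → Fin d → Ω → ℕ` has *right-repeated structure* with midpoint `m`
(in one-based terms, `1 ≤ m ≤ d`, corresponding to the zero-based index `m - 1`)
and parameter `μ`: the subfamily `(X i j)` over all records `i` and attributes
`j ≤ m` (zero-based `(j : ℕ) < m`) is mutually independent, each such `X i j` is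
`{0,1}`-valued with `P(X i j = 1) = μ j`, and every attribute `j > m` (zero-based
`m ≤ (j : ℕ)`) is an exact copy of attribute `m` (zero-based index `m - 1`). -/
def RightRepeated {Ω : Type*} [MeasurableSpace Ω] (P : Measure Ω)
    {n d : ℕ} (m : ℕ) (X : Fin n → Fin d → Ω → ℕ) (μ : Fin d → ℝ) : Prop :=
  (∀ i j, Measurable (X i j)) ∧
  iIndepFun
    (fun p : Fin n × {j : Fin d // (j : ℕ) < m} => X p.1 p.2.1) P ∧
  (∀ i, ∀ j : Fin d, (j : ℕ) < m →
    (∀ ω, X i j ω = 0 ∨ X i j ω = 1) ∧ (P {ω | X i j ω = 1}).toReal = μ j) ∧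
  (∀ i, ∀ j : Fin d, m ≤ (j : ℕ) →
    ∀ jm : Fin d, (jm : ℕ) = m - 1 → X i j = X i jm)

theorem prr_core {Ω : Type*} [MeasurableSpace Ω] (P : Measure Ω) [IsProbabilityMeasure P]
    {n d : ℕ} (m : ℕ)
    (μ : Fin d → ℝ) (X : Fin n → Fin d → Ω → ℕ) (hX : RightRepeated P m X μ)
    (S : Finset (Fin n)) (c : {j : Fin d // (j : ℕ) < m} → ℕ) :
    (P {ω | ∀ j : {j : Fin d // (j : ℕ) < m}, (∑ i ∈ S, X i j.1 ω) = c j}).toReal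
      = ∏ j : {j : Fin d // (j : ℕ) < m},
          (S.card.choose (c j) : ℝ) * μ j.1 ^ (c j) * (1 - μ j.1) ^ (S.card - c j) := by
  obtain ⟨hmeas, hind, hber, -⟩ := hX
  set atom : ({j : Fin d // (j : ℕ) < m} → Finset (Fin n)) → Set Ω := fun T =>
    ⋂ p ∈ S ×ˢ (Finset.univ : Finset {j : Fin d // (j : ℕ) < m}),
      (fun q : Fin n × {j : Fin d // (j : ℕ) < m} => X q.1 q.2.1) p ⁻¹'
        {if p.1 ∈ T p.2 then 1 else 0} with hatom
  have hatom_meas : ∀ T, MeasurableSet (atom T) := by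
    intro T
    refine MeasurableSet.biInter
      ((S ×ˢ (Finset.univ : Finset {j : Fin d // (j : ℕ) < m})).countable_toSet)
      (fun p _ => ?_)
    exact hmeas p.1 p.2.1 (measurableSet_singleton _)
  have hev : {ω | ∀ j : {j : Fin d // (j : ℕ) < m}, (∑ i ∈ S, X i j.1 ω) = c j}
      = ⋃ T ∈ Fintype.piFinset
          (fun j : {j : Fin d // (j : ℕ) < m} => S.powersetCard (c j)), atom T := by
    ext ω
    simp only [Set.mem_setOf_eq, Set.mem_iUnion, hatom, Set.mem_iInter, Set.mem_preimage,
      Set.mem_singleton_iff, Finset.mem_product, Fintype.mem_piFinset, Finset.mem_powersetCard]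
    constructor
    · intro h
      refine ⟨fun j => S.filter (fun i => X i j.1 ω = 1),
        fun j => ⟨Finset.filter_subset _ _, ?_⟩, ?_⟩
      · have hcard : (S.filter (fun i => X i j.1 ω = 1)).card = ∑ i ∈ S, X i j.1 ω := by
          rw [Finset.card_filter]
          refine Finset.sum_congr rfl fun i _ => ?_
          rcases (hber i j.1 j.2).1 ω with h0 | h1
          · simp [h0]
          · simp [h1]
        rw [hcard, h j]
      · rintro p hp
        rcases (hber p.1 p.2.1 p.2.2).1 ω with h0 | h1
        · simp only [Finset.mem_filter, h0]
          simp
        · simp only [Finset.mem_filter, h1]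
          simp [hp.1]
    · rintro ⟨T, hT, h⟩ j
      have hval : ∀ i ∈ S, X i j.1 ω = if i ∈ T j then 1 else 0 := fun i hi =>
        h (i, j) ⟨hi, Finset.mem_univ _⟩
      rw [Finset.sum_congr rfl hval, Finset.sum_ite_mem, Finset.sum_const,
        Finset.inter_eq_right.mpr (hT j).1, smul_eq_mul, mul_one]
      exact (hT j).2
  have hdisj : (↑(Fintype.piFinset
      (fun j : {j : Fin d // (j : ℕ) < m} => S.powersetCard (c j))) :
      Set ({j : Fin d // (j : ℕ) < m} → Finset (Fin n))).PairwiseDisjoint atom := by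
    intro T hT T' hT' hne
    simp only [Finset.coe_sort_coe, Finset.mem_coe, Fintype.mem_piFinset,
      Finset.mem_powersetCard] at hT hT'
    obtain ⟨j, hj⟩ : ∃ j, T j ≠ T' j := by
      by_contra hc; push_neg at hc; exact hne (funext hc)
    obtain ⟨i, hi⟩ : ∃ i, ¬ (i ∈ T j ↔ i ∈ T' j) := by
      by_contra hc; push_neg at hc; exact hj (Finset.ext hc)
    have hiS : i ∈ S := by
      by_cases h1 : i ∈ T j
      · exact (hT j).1 h1
      · have h2 : i ∈ T' j := by tauto
        exact (hT' j).1 h2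
    refine Set.disjoint_left.mpr fun ω hω hω' => ?_
    have e1 : X i j.1 ω = if i ∈ T j then 1 else 0 := by
      have := Set.mem_iInter₂.mp hω (i, j) (Finset.mem_product.mpr ⟨hiS, Finset.mem_univ _⟩)
      simpa using this
    have e2 : X i j.1 ω = if i ∈ T' j then 1 else 0 := by
      have := Set.mem_iInter₂.mp hω' (i, j) (Finset.mem_product.mpr ⟨hiS, Finset.mem_univ _⟩)
      simpa using this
    by_cases h1 : i ∈ T j <;> by_cases h2 : i ∈ T' j <;> simp_all
  have hatomP : ∀ T ∈ Fintype.piFinset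
      (fun j : {j : Fin d // (j : ℕ) < m} => S.powersetCard (c j)),
      (P (atom T)).toReal = ∏ j : {j : Fin d // (j : ℕ) < m},
        μ j.1 ^ (c j) * (1 - μ j.1) ^ (S.card - c j) := by
    intro T hT
    simp only [Fintype.mem_piFinset, Finset.mem_powersetCard] at hT
    have key : P (atom T) = ∏ p ∈ S ×ˢ (Finset.univ : Finset {j : Fin d // (j : ℕ) < m}),
        P ((fun q : Fin n × {j : Fin d // (j : ℕ) < m} => X q.1 q.2.1) p ⁻¹'
          {if p.1 ∈ T p.2 then 1 else 0}) :=
      hind.measure_inter_preimage_eq_mul (S ×ˢ Finset.univ)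
        (sets := fun p : Fin n × {j : Fin d // (j : ℕ) < m} =>
          {if p.1 ∈ T p.2 then 1 else 0})
        (fun p _ => measurableSet_singleton _)
    rw [key, ENNReal.toReal_prod, Finset.prod_product_right]
    refine Finset.prod_congr rfl fun j _ => ?_
    have hone : ∀ i : Fin n, (P ((X i j.1) ⁻¹' {1})).toReal = μ j.1 := by
      intro i
      exact (hber i j.1 j.2).2
    have hzero : ∀ i : Fin n, (P ((X i j.1) ⁻¹' {0})).toReal = 1 - μ j.1 := by
      intro i
      have hcompl : (X i j.1) ⁻¹' ({0} : Set ℕ) = ((X i j.1) ⁻¹' {1})ᶜ := by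
        ext ω
        simp only [Set.mem_preimage, Set.mem_singleton_iff, Set.mem_compl_iff]
        rcases (hber i j.1 j.2).1 ω with h0 | h1
        · simp [h0]
        · simp [h1]
      rw [hcompl, measure_compl (hmeas i j.1 (measurableSet_singleton _)) (measure_ne_top P _),
        measure_univ, ENNReal.toReal_sub_of_le prob_le_one ENNReal.one_ne_top,
        ENNReal.toReal_one, hone i]
    have hstep : ∀ i ∈ S, (P ((fun q : Fin n × {j : Fin d // (j : ℕ) < m} => X q.1 q.2.1)
        (i, j) ⁻¹' {if (i, j).1 ∈ T (i, j).2 then 1 else 0})).toReal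
        = if i ∈ T j then μ j.1 else 1 - μ j.1 := by
      intro i _
      by_cases h : i ∈ T j
      · simp only [h, if_true]; exact hone i
      · simp only [h, if_false]; exact hzero i
    rw [Finset.prod_congr rfl hstep, Finset.prod_ite, Finset.prod_const, Finset.prod_const,
      Finset.filter_mem_eq_inter, Finset.inter_eq_right.mpr (hT j).1, (hT j).2]
    congr 2
    have h1 := Finset.card_filter_add_card_filter_not (s := S) (p := fun i => i ∈ T j)
    have h2 : (S.filter (fun i => i ∈ T j)).card = c j := by
      rw [Finset.filter_mem_eq_inter, Finset.inter_eq_right.mpr (hT j).1, (hT j).2]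
    omega
  rw [hev, measure_biUnion_finset hdisj (fun T _ => hatom_meas T),
    ENNReal.toReal_sum (fun T _ => measure_ne_top P _),
    Finset.sum_congr rfl hatomP, Finset.sum_const, Fintype.card_piFinset, nsmul_eq_mul,
    Nat.cast_prod, ← Finset.prod_mul_distrib]
  refine Finset.prod_congr rfl fun j _ => ?_
  rw [Finset.card_powersetCard, mul_assoc]

/-- **Partial Ratio Equality (side = right).** On a population whose attributes
above the midpoint `m` are exact copies of attribute `m`, the Bayesian decision
ratio equals the likelihood ratio test statistic clipped to the first `m`
attributes; in particular the denominator probability is strictly positive. -/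
theorem partial_ratio_equality_right {Ω : Type*} [MeasurableSpace Ω]
    (P : Measure Ω) [IsProbabilityMeasure P] (n d m : ℕ)
    (hn : 1 ≤ n) (hd : 1 ≤ d) (hm : 1 ≤ m) (hmd : m ≤ d)
    (μ : Fin d → ℝ) (hμ : ∀ j : Fin d, (j : ℕ) < m → 0 < μ j ∧ μ j < 1)
    (X : Fin n → Fin d → Ω → ℕ) (hX : RightRepeated P m X μ)
    (y : Fin d → ℕ) (k : Fin d → ℕ)
    (hyk : ∀ j : Fin d, (j : ℕ) < m → y j ≤ 1 ∧ y j ≤ k j ∧ k j ≤ n)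
    (hrep : ∀ j : Fin d, m ≤ (j : ℕ) →
      k j = k ⟨m - 1, by omega⟩ ∧ y j = y ⟨m - 1, by omega⟩) :
    0 < (P {ω | ∀ j, (∑ i : Fin n, X i j ω) = k j}).toReal ∧
    (P {ω | ∀ j, y j + ∑ i ∈ univ.filter (fun i : Fin n => (i : ℕ) < n - 1),
        X i j ω = k j}).toReal /
      (P {ω | ∀ j, (∑ i : Fin n, X i j ω) = k j}).toReal =
    ∏ j ∈ univ.filter (fun j : Fin d => (j : ℕ) < m),
      (if y j = 1 then ((k j : ℝ) / n) / μ j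
        else (1 - (k j : ℝ) / n) / (1 - μ j)) := by
  have hmd' : m - 1 < d := by omega
  set jm : Fin d := ⟨m - 1, hmd'⟩ with hjmdef
  have hjm : (jm : ℕ) < m := by simp [hjmdef]; omega
  set Sf : Finset (Fin n) := univ.filter (fun i : Fin n => (i : ℕ) < n - 1) with hSf
  -- event rewrites
  have hA : {ω | ∀ j, (∑ i : Fin n, X i j ω) = k j}
      = {ω | ∀ j : {j : Fin d // (j : ℕ) < m},
          (∑ i ∈ (univ : Finset (Fin n)), X i j.1 ω) = k j.1} := by
    ext ω
    simp only [Set.mem_setOf_eq]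
    constructor
    · intro h j; exact h j.1
    · intro h j
      by_cases hj : (j : ℕ) < m
      · exact h ⟨j, hj⟩
      · push_neg at hj
        have hXeq : ∀ i, X i j ω = X i jm ω := fun i =>
          congrFun (hX.2.2.2 i j hj jm (by simp [hjmdef])) ω
        rw [Finset.sum_congr rfl fun i _ => hXeq i, (hrep j hj).1]
        exact h ⟨jm, hjm⟩
  have hB : {ω | ∀ j, y j + ∑ i ∈ Sf, X i j ω = k j}
      = {ω | ∀ j : {j : Fin d // (j : ℕ) < m},
          (∑ i ∈ Sf, X i j.1 ω) = k j.1 - y j.1} := by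
    ext ω
    simp only [Set.mem_setOf_eq]
    constructor
    · intro h j
      have h1 := h j.1
      have h2 := (hyk j.1 j.2).2.1
      omega
    · intro h j
      by_cases hj : (j : ℕ) < m
      · have h1 : (∑ i ∈ Sf, X i j ω) = k j - y j := h ⟨j, hj⟩
        have h2 := (hyk j hj).2.1
        omega
      · push_neg at hj
        have hXeq : ∀ i, X i j ω = X i jm ω := fun i =>
          congrFun (hX.2.2.2 i j hj jm (by simp [hjmdef])) ω
        rw [Finset.sum_congr rfl fun i _ => hXeq i, (hrep j hj).1, (hrep j hj).2]
        have h1 : (∑ i ∈ Sf, X i jm ω) = k jm - y jm := h ⟨jm, hjm⟩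
        have h2 := (hyk jm hjm).2.1
        omega
  -- card of Sf
  have hSfcard : Sf.card = n - 1 := by
    have himg : Sf = Finset.image (Fin.castLE (Nat.sub_le n 1)) univ := by
      ext i
      simp only [hSf, Finset.mem_filter, Finset.mem_univ, true_and, Finset.mem_image]
      constructor
      · intro h; exact ⟨⟨(i : ℕ), h⟩, rfl⟩
      · rintro ⟨a, -, rfl⟩; exact a.isLt
    rw [himg, Finset.card_image_of_injective _ (Fin.castLE_injective _), Finset.card_univ,
      Fintype.card_fin]
  -- probabilities via the core lemma
  have hPA := prr_core P m μ X hX (univ : Finset (Fin n)) (fun j => k j.1)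
  have hPB := prr_core P m μ X hX Sf (fun j => k j.1 - y j.1)
  rw [Finset.card_univ, Fintype.card_fin] at hPA
  rw [hSfcard] at hPB
  rw [hA, hB, hPA, hPB]
  -- positivity
  have hApos : ∀ j : {j : Fin d // (j : ℕ) < m},
      0 < (n.choose (k j.1) : ℝ) * μ j.1 ^ (k j.1) * (1 - μ j.1) ^ (n - k j.1) := by
    intro j
    have h1 := hμ j.1 j.2
    have h2 := hyk j.1 j.2
    have hc : 0 < (n.choose (k j.1) : ℝ) :=
      Nat.cast_pos.mpr (Nat.choose_pos h2.2.2)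
    have hμp : 0 < μ j.1 ^ (k j.1) := pow_pos h1.1 _
    have h1μ : 0 < (1 - μ j.1) ^ (n - k j.1) := pow_pos (by linarith [h1.2]) _
    positivity
  have hprodpos : 0 < ∏ j : {j : Fin d // (j : ℕ) < m},
      (n.choose (k j.1) : ℝ) * μ j.1 ^ (k j.1) * (1 - μ j.1) ^ (n - k j.1) :=
    Finset.prod_pos fun j _ => hApos j
  refine ⟨hprodpos, ?_⟩
  rw [← Finset.prod_div_distrib]
  rw [Finset.prod_subtype (p := fun j : Fin d => (j : ℕ) < m)
    (univ.filter fun j : Fin d => (j : ℕ) < m) (fun j => by simp)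
    (fun j : Fin d => if y j = 1 then ((k j : ℝ) / n) / μ j
      else (1 - (k j : ℝ) / n) / (1 - μ j))]
  refine Finset.prod_congr rfl fun j _ => ?_
  -- per-factor computation
  have h1 := hμ j.1 j.2
  have h2 := hyk j.1 j.2
  have hn0 : (n : ℝ) ≠ 0 := Nat.cast_ne_zero.mpr (by omega)
  have hμ0 : μ j.1 ≠ 0 := ne_of_gt h1.1
  have hμ1 : (1 : ℝ) - μ j.1 ≠ 0 := by linarith [h1.2]
  have hC0 : (n.choose (k j.1) : ℝ) ≠ 0 :=
    Nat.cast_ne_zero.mpr (Nat.choose_pos h2.2.2).ne'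
  by_cases hy1 : y j.1 = 1
  · simp only [hy1, if_true]
    have hk1 : 1 ≤ k j.1 := by omega
    have he : (n - 1) - (k j.1 - 1) = n - k j.1 := by omega
    have hpow : μ j.1 ^ (k j.1) = μ j.1 ^ (k j.1 - 1) * μ j.1 := by
      rw [← pow_succ]; congr 1; omega
    have hnat : n * (n - 1).choose (k j.1 - 1) = n.choose (k j.1) * k j.1 := by
      have h := Nat.add_one_mul_choose_eq (n - 1) (k j.1 - 1)
      have e1 : n - 1 + 1 = n := by omega
      have e2 : k j.1 - 1 + 1 = k j.1 := by omega
      rw [e1, e2] at h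
      exact h
    have hnatR : (n : ℝ) * ((n - 1).choose (k j.1 - 1) : ℝ)
        = (n.choose (k j.1) : ℝ) * (k j.1 : ℝ) := by exact_mod_cast hnat
    rw [he, hpow]
    have hP1 : μ j.1 ^ (k j.1 - 1) ≠ 0 := pow_ne_zero _ hμ0
    have hP2 : (1 - μ j.1) ^ (n - k j.1) ≠ 0 := pow_ne_zero _ hμ1
    field_simp
    linear_combination hnatR
  · have hy0 : y j.1 = 0 := by omega
    simp only [hy1, if_false, hy0, Nat.sub_zero, zero_ne_one]
    by_cases hkn : k j.1 = n
    · rw [hkn]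
      have hc0 : (n - 1).choose n = 0 := Nat.choose_eq_zero_of_lt (by omega)
      rw [hc0]
      rw [div_self hn0]
      simp
    · have hklt : k j.1 < n := lt_of_le_of_ne h2.2.2 hkn
      have he : n - k j.1 = ((n - 1) - k j.1) + 1 := by omega
      have hpow : (1 - μ j.1) ^ (n - k j.1)
          = (1 - μ j.1) ^ ((n - 1) - k j.1) * (1 - μ j.1) := by rw [he, pow_succ]
      have hnat : n * (n - 1).choose (k j.1) = n.choose (k j.1) * (n - k j.1) := by
        have ha := Nat.add_one_mul_choose_eq (n - 1) (k j.1)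
        have e1 : n - 1 + 1 = n := by omega
        rw [e1] at ha
        have hb := Nat.choose_succ_right_eq n (k j.1)
        exact ha.trans hb
      have hnatR : (n : ℝ) * ((n - 1).choose (k j.1) : ℝ)
          = (n.choose (k j.1) : ℝ) * ((n : ℝ) - (k j.1 : ℝ)) := by
        rw [show (n : ℝ) - (k j.1 : ℝ) = ((n - k j.1 : ℕ) : ℝ) by
          rw [Nat.cast_sub hklt.le]]
        exact_mod_cast hnat
      rw [hpow]
      have hP1 : μ j.1 ^ (k j.1) ≠ 0 := pow_ne_zero _ hμ0
      have hP2 : (1 - μ j.1) ^ ((n - 1) - k j.1) ≠ 0 := pow_ne_zero _ hμ1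
      field_simp
      linear_combination hnatR
end
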